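/- Let E(s)(x) = ∑_{ρ ∈ s→} f_ρ(x) where each f_ρ is either a nonnegative constant or a monomial c_ρ ∏_i x_i^{a_{ρi}} with c_ρ > 0 and total degree a_ρ > 0, and let x_m ∈ (0,∞)^n. Then -E(s)(x) ≥ K - ∑_{i=1}^n ∑_{ρ parametric} (f_ρ(x_m) · a_{ρi} / (a_ρ · x_{mi}^{a_ρ})) · x_i^{a_ρ}, where K is the constant -∑_{ρ constant} f_ρ - ... chosen so that equality holds at x = x_m. -/

import Mathlib

open Finset


/-- Key AM-GM lemma: weighted AM-GM for ratios. -/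
lemma key_amgm {n : ℕ} (a : Fin n → ℕ) (ha : 0 < ∑ i, a i)
    (t : Fin n → ℝ) (ht : ∀ i, 0 ≤ t i) :
    ∏ i, t i ^ a i ≤ ∑ i, (a i : ℝ) / (∑ j, a j : ℕ) * t i ^ (∑ j, a j) := by
  set N := ∑ j, a j with hN
  have hA : (0:ℝ) < (N:ℝ) := by exact_mod_cast ha
  have h := Real.geom_mean_le_arith_mean_weighted Finset.univ
      (fun i => (a i : ℝ) / N) (fun i => t i ^ N)
      (fun i _ => by positivity)
      (by rw [← Finset.sum_div]; rw [show ∑ i, ((a i:ℝ)) = (N:ℝ) by exact_mod_cast hN.symm]; field_simp)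
      (fun i _ => pow_nonneg (ht i) _)
  calc ∏ i, t i ^ a i = ∏ i, (t i ^ N : ℝ) ^ ((a i : ℝ) / N) := by
        refine Finset.prod_congr rfl fun i _ => ?_
        rw [← Real.rpow_natCast (t i) N, ← Real.rpow_mul (ht i)]
        rw [show (N:ℝ) * ((a i : ℝ)/N) = (a i : ℝ) by field_simp]
        rw [Real.rpow_natCast]
    _ ≤ ∑ i, (a i : ℝ) / N * t i ^ N := h

lemma per_rho {n : ℕ} (a : Fin n → ℕ) (ha : 0 < ∑ i, a i) (c : ℝ) (hc : 0 ≤ c)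
    (xm x : Fin n → ℝ) (hxm : ∀ i, 0 < xm i) (hx : ∀ i, 0 < x i) :
    c * ∏ i, x i ^ a i ≤
      ∑ i, (c * ∏ j, xm j ^ a j) * (a i : ℝ) /
        ((∑ j, a j : ℕ) * xm i ^ (∑ j, a j)) * x i ^ (∑ j, a j) := by
  have hP : (0:ℝ) < ∏ j, xm j ^ a j := Finset.prod_pos fun j _ => pow_pos (hxm j) _
  have key := key_amgm a ha (fun i => x i / xm i)
    (fun i => le_of_lt (div_pos (hx i) (hxm i)))
  have hA : (0:ℝ) < ((∑ j, a j : ℕ):ℝ) := by exact_mod_cast ha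
  calc c * ∏ i, x i ^ a i
      = (c * ∏ j, xm j ^ a j) * ∏ i, (x i / xm i) ^ a i := by
        rw [mul_assoc, ← Finset.prod_mul_distrib]
        congr 1
        refine Finset.prod_congr rfl fun i _ => ?_
        rw [div_pow, mul_div_cancel₀ _ (pow_ne_zero _ (hxm i).ne')]
    _ ≤ (c * ∏ j, xm j ^ a j) * ∑ i, (a i : ℝ) / (∑ j, a j : ℕ) * (x i / xm i) ^ (∑ j, a j) := by
        exact mul_le_mul_of_nonneg_left key (mul_nonneg hc hP.le)
    _ = _ := by
        rw [Finset.mul_sum]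
        refine Finset.sum_congr rfl fun i _ => ?_
        rw [div_pow]
        have h1 : (xm i) ^ (∑ j, a j) ≠ 0 := pow_ne_zero _ (ne_of_gt (hxm i))
        field_simp

lemma per_rho_eq {n : ℕ} (a : Fin n → ℕ) (ha : 0 < ∑ i, a i) (c : ℝ)
    (xm : Fin n → ℝ) (hxm : ∀ i, 0 < xm i) :
    ∑ i, (c * ∏ j, xm j ^ a j) * (a i : ℝ) /
        ((∑ j, a j : ℕ) * xm i ^ (∑ j, a j)) * xm i ^ (∑ j, a j)
      = c * ∏ i, xm i ^ a i := by
  have hA : ((∑ j, a j : ℕ):ℝ) ≠ 0 := by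
    exact_mod_cast ha.ne'
  calc ∑ i, (c * ∏ j, xm j ^ a j) * (a i : ℝ) /
        ((∑ j, a j : ℕ) * xm i ^ (∑ j, a j)) * xm i ^ (∑ j, a j)
      = ∑ i, (c * ∏ j, xm j ^ a j) * ((a i : ℝ) / (∑ j, a j : ℕ)) := by
        refine Finset.sum_congr rfl fun i _ => ?_
        have h1 : (xm i) ^ (∑ j, a j) ≠ 0 := pow_ne_zero _ (hxm i).ne'
        field_simp
    _ = (c * ∏ j, xm j ^ a j) * ((∑ i, (a i:ℝ)) / (∑ j, a j : ℕ)) := by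
        rw [← Finset.mul_sum, ← Finset.sum_div]
    _ = c * ∏ i, xm i ^ a i := by
        rw [show ∑ i, ((a i:ℝ)) = ((∑ j, a j : ℕ):ℝ) by push_cast; rfl]
        rw [div_self hA, mul_one]

theorem exit_rate_minorization (n : ℕ) {ι : Type*} [Fintype ι] [DecidableEq ι]
    (c : ι → ℝ) (a : ι → Fin n → ℕ)
    (hc : ∀ ρ, 0 ≤ c ρ)
    (hcp : ∀ ρ, 0 < ∑ i, a ρ i → 0 < c ρ)
    (xm : Fin n → ℝ) (hxm : ∀ i, 0 < xm i) :
    ∃ K : ℝ,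
      (∀ x : Fin n → ℝ, (∀ i, 0 < x i) →
        -(∑ ρ, c ρ * ∏ i, x i ^ a ρ i) ≥
          K - ∑ i, ∑ ρ ∈ Finset.univ.filter (fun ρ => 0 < ∑ i, a ρ i),
            (c ρ * ∏ j, xm j ^ a ρ j) * (a ρ i : ℝ) /
              ((∑ j, a ρ j : ℕ) * xm i ^ (∑ j, a ρ j)) * x i ^ (∑ j, a ρ j)) ∧
      -(∑ ρ, c ρ * ∏ i, xm i ^ a ρ i) =
          K - ∑ i, ∑ ρ ∈ Finset.univ.filter (fun ρ => 0 < ∑ i, a ρ i),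
            (c ρ * ∏ j, xm j ^ a ρ j) * (a ρ i : ℝ) /
              ((∑ j, a ρ j : ℕ) * xm i ^ (∑ j, a ρ j)) * xm i ^ (∑ j, a ρ j) := by
  classical
  refine ⟨-(∑ ρ ∈ Finset.univ.filter (fun ρ => ¬ 0 < ∑ i, a ρ i), c ρ), ?_, ?_⟩
  · intro x hx
    rw [ge_iff_le, sub_le_iff_le_add, neg_add_eq_sub, le_sub_iff_add_le,
      ← sub_nonneg]
    have hsplit : (∑ ρ, c ρ * ∏ i, x i ^ a ρ i)
        = (∑ ρ ∈ Finset.univ.filter (fun ρ => 0 < ∑ i, a ρ i), c ρ * ∏ i, x i ^ a ρ i)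
          + ∑ ρ ∈ Finset.univ.filter (fun ρ => ¬ 0 < ∑ i, a ρ i), c ρ := by
      rw [← Finset.sum_filter_add_sum_filter_not Finset.univ (fun ρ => 0 < ∑ i, a ρ i)]
      congr 1
      refine Finset.sum_congr rfl fun ρ hρ => ?_
      simp only [Finset.mem_filter, not_lt, Nat.le_zero] at hρ
      have : ∀ i, a ρ i = 0 := fun i =>
        (Finset.sum_eq_zero_iff.mp (by simpa using hρ.2)) i (Finset.mem_univ i)
      simp [this]
    have hswap : (∑ i, ∑ ρ ∈ Finset.univ.filter (fun ρ => 0 < ∑ i, a ρ i),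
            (c ρ * ∏ j, xm j ^ a ρ j) * (a ρ i : ℝ) /
              ((∑ j, a ρ j : ℕ) * xm i ^ (∑ j, a ρ j)) * x i ^ (∑ j, a ρ j))
        = ∑ ρ ∈ Finset.univ.filter (fun ρ => 0 < ∑ i, a ρ i), ∑ i,
            (c ρ * ∏ j, xm j ^ a ρ j) * (a ρ i : ℝ) /
              ((∑ j, a ρ j : ℕ) * xm i ^ (∑ j, a ρ j)) * x i ^ (∑ j, a ρ j) :=
      Finset.sum_comm
    rw [hsplit, hswap]
    have h : ∀ ρ ∈ Finset.univ.filter (fun ρ => 0 < ∑ i, a ρ i),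
        c ρ * ∏ i, x i ^ a ρ i ≤ ∑ i,
            (c ρ * ∏ j, xm j ^ a ρ j) * (a ρ i : ℝ) /
              ((∑ j, a ρ j : ℕ) * xm i ^ (∑ j, a ρ j)) * x i ^ (∑ j, a ρ j) := by
      intro ρ hρ
      simp only [Finset.mem_filter] at hρ
      exact per_rho (a ρ) hρ.2 (c ρ) (hc ρ) xm x hxm hx
    have := Finset.sum_le_sum h
    linarith
  · have hswap : (∑ i, ∑ ρ ∈ Finset.univ.filter (fun ρ => 0 < ∑ i, a ρ i),
            (c ρ * ∏ j, xm j ^ a ρ j) * (a ρ i : ℝ) /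
              ((∑ j, a ρ j : ℕ) * xm i ^ (∑ j, a ρ j)) * xm i ^ (∑ j, a ρ j))
        = ∑ ρ ∈ Finset.univ.filter (fun ρ => 0 < ∑ i, a ρ i), ∑ i,
            (c ρ * ∏ j, xm j ^ a ρ j) * (a ρ i : ℝ) /
              ((∑ j, a ρ j : ℕ) * xm i ^ (∑ j, a ρ j)) * xm i ^ (∑ j, a ρ j) :=
      Finset.sum_comm
    rw [hswap]
    have heq : ∀ ρ ∈ Finset.univ.filter (fun ρ => 0 < ∑ i, a ρ i),
        (∑ i, (c ρ * ∏ j, xm j ^ a ρ j) * (a ρ i : ℝ) /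
              ((∑ j, a ρ j : ℕ) * xm i ^ (∑ j, a ρ j)) * xm i ^ (∑ j, a ρ j))
          = c ρ * ∏ i, xm i ^ a ρ i := by
      intro ρ hρ
      simp only [Finset.mem_filter] at hρ
      exact per_rho_eq (a ρ) hρ.2 (c ρ) xm hxm
    rw [Finset.sum_congr rfl heq]
    have hsplit : (∑ ρ, c ρ * ∏ i, xm i ^ a ρ i)
        = (∑ ρ ∈ Finset.univ.filter (fun ρ => 0 < ∑ i, a ρ i), c ρ * ∏ i, xm i ^ a ρ i)
          + ∑ ρ ∈ Finset.univ.filter (fun ρ => ¬ 0 < ∑ i, a ρ i), c ρ := by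
      rw [← Finset.sum_filter_add_sum_filter_not Finset.univ (fun ρ => 0 < ∑ i, a ρ i)]
      congr 1
      refine Finset.sum_congr rfl fun ρ hρ => ?_
      simp only [Finset.mem_filter, not_lt, Nat.le_zero] at hρ
      have : ∀ i, a ρ i = 0 := fun i =>
        (Finset.sum_eq_zero_iff.mp (by simpa using hρ.2)) i (Finset.mem_univ i)
      simp [this]
    rw [hsplit]
    ring
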